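/- Every finite-rank order continuous lattice homomorphism T: X → Y between Banach lattices attains its norm, i.e., there exists x in the closed unit ball of X with ‖Tx‖ = ‖T‖. -/

import Mathlib

section LatAux
variable {X : Type*} [NormedAddCommGroup X] [Lattice X] [IsOrderedAddMonoid X] [HasSolidNorm X]

/-- Riesz decomposition property. -/
lemma my_riesz_decomp {z a b : X} (ha : 0 ≤ a) (hb : 0 ≤ b) (hz : 0 ≤ z) (hzab : z ≤ a + b) :
    ∃ z1 z2 : X, z = z1 + z2 ∧ 0 ≤ z1 ∧ z1 ≤ a ∧ 0 ≤ z2 ∧ z2 ≤ b := by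
  refine ⟨z ⊓ a, z - z ⊓ a, by abel, le_inf hz ha, inf_le_right, by simp [inf_le_left], ?_⟩
  have h : z - z ⊓ a = (z - z) ⊔ (z - a) := sub_inf z a z
  rw [h, sub_self]
  exact sup_le hb (by rwa [sub_le_iff_le_add, add_comm])

lemma my_inf_add_le {a x y : X} (ha : 0 ≤ a) (hx : 0 ≤ x) (hy : 0 ≤ y) :
    a ⊓ (x + y) ≤ a ⊓ x + a ⊓ y := by
  obtain ⟨z1, z2, hzz, h1, h1x, h2, h2y⟩ :=
    my_riesz_decomp hx hy (le_inf ha (add_nonneg hx hy) : (0:X) ≤ a ⊓ (x+y)) inf_le_right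
  have hsum : z1 + z2 ≤ a := hzz ▸ (inf_le_left : a ⊓ (x+y) ≤ a)
  have hz1a : z1 ≤ a := le_trans (le_add_of_nonneg_right h2) hsum
  have hz2a : z2 ≤ a := le_trans (le_add_of_nonneg_left h1) hsum
  rw [hzz]
  exact add_le_add (le_inf hz1a h1x) (le_inf hz2a h2y)

lemma my_inf_nsmul_le {a x : X} (ha : 0 ≤ a) (hx : 0 ≤ x) (n : ℕ) :
    a ⊓ (n • x) ≤ n • (a ⊓ x) := by
  induction n with
  | zero => simpa using inf_le_right
  | succ n ih =>
    calc a ⊓ ((n+1) • x) = a ⊓ (n • x + x) := by rw [succ_nsmul]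
      _ ≤ a ⊓ (n • x) + a ⊓ x := my_inf_add_le ha (nsmul_nonneg hx n) hx
      _ ≤ n • (a ⊓ x) + a ⊓ x := add_le_add_left ih _
      _ = (n+1) • (a ⊓ x) := (succ_nsmul _ _).symm

lemma my_nsmul_cancel {x : X} {n : ℕ} (hn : 0 < n) (h : 0 ≤ n • x) : 0 ≤ x := by
  have hd : x⁺ ⊓ x⁻ = 0 := posPart_inf_negPart_eq_zero x
  have hba : n • x⁻ ≤ n • x⁺ := by
    rw [← sub_nonneg, ← nsmul_sub]
    simpa [posPart_sub_negPart] using h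
  have h1 : x⁻ ⊓ (n • x⁺) = 0 := le_antisymm
    (le_trans (my_inf_nsmul_le (negPart_nonneg x) (posPart_nonneg x) n)
      (by rw [inf_comm, hd, smul_zero]))
    (le_inf (negPart_nonneg x) (nsmul_nonneg (posPart_nonneg x) n))
  have h2 : (n • x⁻) ⊓ (n • x⁺) = 0 := le_antisymm
    (by
      calc (n • x⁻) ⊓ (n • x⁺) = (n • x⁺) ⊓ (n • x⁻) := inf_comm ..
        _ ≤ n • ((n • x⁺) ⊓ x⁻) := my_inf_nsmul_le (nsmul_nonneg (posPart_nonneg x) n)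
            (negPart_nonneg x) n
        _ = 0 := by rw [inf_comm, h1, smul_zero])
    (le_inf (nsmul_nonneg (negPart_nonneg x) n) (nsmul_nonneg (posPart_nonneg x) n))
  have h3 : n • x⁻ = 0 := by
    have := le_inf (le_refl (n • x⁻)) hba
    rw [h2] at this
    exact le_antisymm this (nsmul_nonneg (negPart_nonneg x) n)
  have h4 : x⁻ = 0 := by
    have h5 : (1:ℕ) • x⁻ ≤ n • x⁻ := nsmul_le_nsmul_left (negPart_nonneg x) hn
    rw [one_smul, h3] at h5
    exact le_antisymm h5 (negPart_nonneg x)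
  exact negPart_eq_zero.mp h4

end LatAux

section SmulAux
variable {X : Type*} [NormedAddCommGroup X] [Lattice X] [IsOrderedAddMonoid X] [HasSolidNorm X] [NormedSpace ℝ X]

lemma my_rat_smul_nonneg {x : X} (hx : 0 ≤ x) (q : ℚ) (hq : 0 ≤ q) : 0 ≤ (q : ℝ) • x := by
  have hden : 0 < q.den := q.den_pos
  apply my_nsmul_cancel hden
  have : q.den • ((q:ℝ) • x) = (q.num.toNat : ℕ) • x := by
    rw [← Nat.cast_smul_eq_nsmul ℝ, ← Nat.cast_smul_eq_nsmul ℝ, smul_smul]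
    congr 1
    have h1 : ((q.den : ℚ) * q : ℚ) = (q.num : ℚ) := q.den_mul_eq_num
    have h2 : ((q.den : ℝ) * (q : ℝ)) = ((q.num : ℚ) : ℝ) := by
      push_cast [← h1]
      ring
    have h3 : ((q.num.toNat : ℕ) : ℝ) = ((q.num : ℤ) : ℝ) := by
      exact_mod_cast congrArg (fun n : ℤ => (n : ℝ)) (Int.toNat_of_nonneg (Rat.num_nonneg.mpr hq))
    rw [h3, h2]
    push_cast
    ring
  rw [this]
  exact nsmul_nonneg hx _

lemma my_smul_nonneg {r : ℝ} {x : X} (hr : 0 ≤ r) (hx : 0 ≤ x) : 0 ≤ r • x := by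
  have hcl : IsClosed {t : ℝ | 0 ≤ |t| • x} :=
    isClosed_nonneg.preimage ((continuous_abs).smul continuous_const)
  have hsub : Set.range ((↑) : ℚ → ℝ) ⊆ {t : ℝ | 0 ≤ |t| • x} := by
    rintro - ⟨q, rfl⟩
    have : |(q : ℝ)| = ((|q| : ℚ) : ℝ) := by push_cast; ring
    simp only [Set.mem_setOf_eq, this]
    exact my_rat_smul_nonneg hx _ (abs_nonneg q)
  have hall : ∀ t : ℝ, 0 ≤ |t| • x := by
    intro t
    have hmem : t ∈ closure (Set.range ((↑) : ℚ → ℝ)) := Rat.denseRange_cast t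
    have := (closure_mono hsub) hmem
    rwa [hcl.closure_eq] at this
  have := hall r
  rwa [abs_of_nonneg hr] at this

lemma my_smul_mono {r : ℝ} {x y : X} (hr : 0 ≤ r) (hxy : x ≤ y) : r • x ≤ r • y := by
  rw [← sub_nonneg, ← smul_sub]
  exact my_smul_nonneg hr (by rwa [sub_nonneg])

lemma my_abs_smul_le (r : ℝ) (x : X) : |r • x| ≤ |r| • |x| := by
  have key : ∀ s : ℝ, 0 ≤ s → ∀ y : X, |s • y| ≤ s • |y| := by
    intro s hs y
    have h1 : s • y ≤ s • |y| := my_smul_mono hs (show y ≤ |y| from le_sup_left)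
    have h2 : -(s • y) ≤ s • |y| := by
      rw [← smul_neg]
      exact my_smul_mono hs (show -y ≤ |y| from le_sup_right)
    exact sup_le h1 h2
  rcases le_total 0 r with hr | hr
  · rw [abs_of_nonneg hr]
    exact key r hr x
  · rw [abs_of_nonpos hr]
    have h : (-r) • (-x) = r • x := by rw [neg_smul, smul_neg, neg_neg]
    calc |r • x| = |(-r) • (-x)| := by rw [h]
      _ ≤ (-r) • |(-x)| := key (-r) (neg_nonneg.mpr hr) (-x)
      _ = (-r) • |x| := by rw [abs_neg]

end SmulAux

section BdDef
variable {X Y : Type*} [NormedAddCommGroup X] [Lattice X] [IsOrderedAddMonoid X] [HasSolidNorm X] [NormedSpace ℝ X]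
  [NormedAddCommGroup Y] [Lattice Y] [IsOrderedAddMonoid Y] [HasSolidNorm Y] [NormedSpace ℝ Y]

lemma my_inf_abs_nonneg (v b : X) : 0 ≤ |v| ⊓ |b| := le_inf (abs_nonneg v) (abs_nonneg b)

/-- The disjoint complement of the kernel of `T`. -/
def myBd (T : X →L[ℝ] Y) : Submodule ℝ X where
  carrier := {v | ∀ b : X, T b = 0 → |v| ⊓ |b| = 0}
  zero_mem' := by intro b hb; simp
  add_mem' := by
    intro v w hv hw b hb
    refine le_antisymm ?_ (my_inf_abs_nonneg _ _)
    have h1 : |v + w| ⊓ |b| ≤ (|v| + |w|) ⊓ |b| := inf_le_inf_right _ (abs_add_le v w)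
    have h2 : (|v| + |w|) ⊓ |b| = |b| ⊓ (|v| + |w|) := inf_comm ..
    have h3 : |b| ⊓ (|v| + |w|) ≤ |b| ⊓ |v| + |b| ⊓ |w| :=
      my_inf_add_le (abs_nonneg b) (abs_nonneg v) (abs_nonneg w)
    have h4 : |b| ⊓ |v| = 0 := (inf_comm .. ).trans (hv b hb)
    have h5 : |b| ⊓ |w| = 0 := (inf_comm .. ).trans (hw b hb)
    calc |v + w| ⊓ |b| ≤ |b| ⊓ |v| + |b| ⊓ |w| := by rw [← h2] at h3; exact h1.trans h3
      _ = 0 := by rw [h4, h5, add_zero]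
  smul_mem' := by
    intro r v hv b hb
    refine le_antisymm ?_ (my_inf_abs_nonneg _ _)
    obtain ⟨n, hn⟩ := exists_nat_ge |r|
    have h1 : |r • v| ≤ n • |v| := by
      refine (my_abs_smul_le r v).trans ?_
      have h2 : |r| • |v| ≤ (n : ℝ) • |v| := by
        rw [← sub_nonneg, ← sub_smul]
        exact my_smul_nonneg (by linarith) (abs_nonneg v)
      rwa [Nat.cast_smul_eq_nsmul] at h2
    have h4 : |b| ⊓ |v| = 0 := (inf_comm ..).trans (hv b hb)
    calc |r • v| ⊓ |b| ≤ (n • |v|) ⊓ |b| := inf_le_inf_right _ h1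
      _ = |b| ⊓ (n • |v|) := inf_comm ..
      _ ≤ n • (|b| ⊓ |v|) := my_inf_nsmul_le (abs_nonneg b) (abs_nonneg v) n
      _ = 0 := by rw [h4, smul_zero]

lemma my_mem_Bd {T : X →L[ℝ] Y} {v : X} :
    v ∈ myBd T ↔ ∀ b : X, T b = 0 → |v| ⊓ |b| = 0 := Iff.rfl

end BdDef

section StepA
variable {X Y : Type*} [NormedAddCommGroup X] [Lattice X] [IsOrderedAddMonoid X] [HasSolidNorm X] [NormedSpace ℝ X]
  [NormedAddCommGroup Y] [Lattice Y] [IsOrderedAddMonoid Y] [HasSolidNorm Y] [NormedSpace ℝ Y]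

lemma my_stepA (T : X →L[ℝ] Y)
    (hhom : ∀ x y : X, T (x ⊔ y) = T x ⊔ T y)
    (hrank : FiniteDimensional ℝ (LinearMap.range (T : X →ₗ[ℝ] Y)))
    (hoc : ∀ S : Set X, S.Nonempty → DirectedOn (· ≥ ·) S → IsGLB S 0 →
      IsGLB ((fun x => |T x|) '' S) 0)
    {x : X} (hx : 0 ≤ x) : ∃ v ∈ myBd T, T v = T x := by
  have hpos : ∀ {a b : X}, a ≤ b → T a ≤ T b := by
    intro a b hab
    have h := hhom a b
    rw [sup_eq_right.mpr hab] at h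
    exact sup_eq_right.mp h.symm
  have habs : ∀ a : X, T |a| = |T a| := by
    intro a
    have h : |a| = a ⊔ -a := rfl
    rw [h, hhom, map_neg]
    rfl
  set C : Set X := {w | ∃ b v : X, T b = 0 ∧ v ∈ myBd T ∧ w = b + v} with hCdef
  have hker_of : ∀ {s a : X}, 0 ≤ s → s ≤ |a| → T a = 0 → T s = 0 := by
    intro s a hs hsa ha
    have h1 : T s ≤ T |a| := hpos hsa
    rw [habs, ha, abs_zero] at h1
    exact le_antisymm h1 (by simpa using hpos hs)
  have hBd_solid : ∀ {z v : X}, |z| ≤ |v| → v ∈ myBd T → z ∈ myBd T := by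
    intro z v hzv hv b hb
    exact le_antisymm ((inf_le_inf_right _ hzv).trans_eq (hv b hb)) (my_inf_abs_nonneg _ _)
  have hC0 : (0 : X) ∈ C := ⟨0, 0, by simp, (myBd T).zero_mem, by simp⟩
  have hCadd : ∀ {w1 w2 : X}, w1 ∈ C → w2 ∈ C → w1 + w2 ∈ C := by
    rintro w1 w2 ⟨b1, v1, hb1, hv1, rfl⟩ ⟨b2, v2, hb2, hv2, rfl⟩
    exact ⟨b1 + b2, v1 + v2, by rw [map_add, hb1, hb2, add_zero],
      (myBd T).add_mem hv1 hv2, by abel⟩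
  have hCnsmul : ∀ (n : ℕ) {w : X}, w ∈ C → n • w ∈ C := by
    intro n
    induction n with
    | zero => intro w _; simpa using hC0
    | succ n ih =>
      intro w hw
      rw [succ_nsmul]
      exact hCadd (ih hw) hw
  have hCsolid : ∀ {z w : X}, |z| ≤ |w| → w ∈ C → z ∈ C := by
    rintro z w hzw ⟨b, v, hb, hv, rfl⟩
    have h1 : |z| ≤ |b| + |v| := hzw.trans (abs_add_le b v)
    have hdec : ∀ s : X, 0 ≤ s → s ≤ |z| → s ∈ C := by
      intro s hs hsz
      obtain ⟨s1, s2, hss, hs1, hs1b, hs2, hs2v⟩ :=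
        my_riesz_decomp (abs_nonneg b) (abs_nonneg v) hs (hsz.trans h1)
      exact ⟨s1, s2, hker_of hs1 hs1b hb,
        hBd_solid (show |s2| ≤ |v| by rw [abs_of_nonneg hs2]; exact hs2v) hv, hss⟩
    have hzp : z⁺ ∈ C := hdec z⁺ (posPart_nonneg z) (sup_le (le_sup_left) (abs_nonneg z))
    have hzn : z⁻ ∈ C := hdec z⁻ (negPart_nonneg z)
      (sup_le (le_sup_right) (abs_nonneg z))
    obtain ⟨b1, v1, hb1, hv1, h1'⟩ := hzp
    obtain ⟨b2, v2, hb2, hv2, h2'⟩ := hzn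
    refine ⟨b1 - b2, v1 - v2, by rw [map_sub, hb1, hb2, sub_zero],
      (myBd T).sub_mem hv1 hv2, ?_⟩
    have := posPart_sub_negPart z
    rw [← this, h1', h2']
    abel
  -- the directed set D
  set D : Set X := {w | w ∈ C ∧ 0 ≤ w ∧ w ≤ x} with hDdef
  have hD0 : (0 : X) ∈ D := ⟨hC0, le_rfl, hx⟩
  have hDsup : ∀ {w1 w2 : X}, w1 ∈ D → w2 ∈ D → w1 ⊔ w2 ∈ D := by
    rintro w1 w2 ⟨hw1C, hw10, hw1x⟩ ⟨hw2C, hw20, hw2x⟩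
    refine ⟨?_, le_trans hw10 le_sup_left, sup_le hw1x hw2x⟩
    have h1 : |w1 ⊔ w2| ≤ |w1 + w2| := by
      rw [abs_of_nonneg (le_trans hw10 le_sup_left), abs_of_nonneg (add_nonneg hw10 hw20)]
      exact sup_le (le_add_of_nonneg_right hw20) (le_add_of_nonneg_left hw10)
    exact hCsolid h1 (hCadd hw1C hw2C)
  -- x is the supremum of D
  have hlub : IsLUB D x := by
    constructor
    · intro w hw
      exact hw.2.2
    · intro y hy
      set z := x - x ⊓ y with hzdef
      have hz0 : 0 ≤ z := sub_nonneg.mpr inf_le_left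
      have key : ∀ w : X, w ∈ C → 0 ≤ w → w ≤ z → w = 0 := by
        intro w hwC hw0 hwz
        have hn : ∀ n : ℕ, n • w ≤ x := by
          intro n
          induction n with
          | zero => simpa using hx
          | succ n ih =>
            have hmemD : n • w ∈ D := ⟨hCnsmul n hwC, nsmul_nonneg hw0 n, ih⟩
            have h2 : n • w ≤ x ⊓ y := le_inf ih (hy hmemD)
            calc (n+1) • w = n • w + w := succ_nsmul w n
              _ ≤ (x ⊓ y) + z := add_le_add h2 hwz
              _ = x := by rw [hzdef]; abel
        have hnorm : ∀ n : ℕ, (n : ℝ) * ‖w‖ ≤ ‖x‖ := by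
          intro n
          have h1 : |n • w| ≤ |x| := by
            rw [abs_of_nonneg (nsmul_nonneg hw0 n), abs_of_nonneg hx]
            exact hn n
          have h2 := norm_le_norm_of_abs_le_abs h1
          rwa [← Nat.cast_smul_eq_nsmul ℝ, norm_smul, Real.norm_natCast] at h2
        by_contra hwne
        have hwpos : 0 < ‖w‖ := norm_pos_iff.mpr hwne
        obtain ⟨n, hn'⟩ := exists_nat_gt (‖x‖ / ‖w‖)
        have h3 := hnorm n
        have h4 : ‖x‖ / ‖w‖ * ‖w‖ < (n : ℝ) * ‖w‖ := by
          exact mul_lt_mul_of_pos_right hn' hwpos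
        rw [div_mul_cancel₀ _ (ne_of_gt hwpos)] at h4
        linarith
      have hzBd : z ∈ myBd T := by
        intro b hb
        rw [abs_of_nonneg hz0]
        refine key (z ⊓ |b|) ?_ (le_inf hz0 (abs_nonneg b)) inf_le_left
        have hbC : |b| ∈ C := ⟨|b|, 0, by rw [habs, hb, abs_zero], (myBd T).zero_mem, by simp⟩
        refine hCsolid ?_ hbC
        rw [abs_of_nonneg (le_inf hz0 (abs_nonneg b)), abs_abs]
        exact inf_le_right
      have hzC : z ∈ C := ⟨0, z, map_zero T, hzBd, by simp⟩
      have hz_eq : z = 0 := key z hzC hz0 le_rfl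
      have : x ⊓ y = x := by
        rw [hzdef] at hz_eq
        have := sub_eq_zero.mp hz_eq
        exact this.symm
      exact inf_eq_left.mp this
  -- apply order continuity
  set S : Set X := (fun w => x - w) '' D with hSdef
  have hSne : S.Nonempty := ⟨x - 0, 0, hD0, rfl⟩
  have hSdir : DirectedOn (· ≥ ·) S := by
    rintro - ⟨w1, hw1, rfl⟩ - ⟨w2, hw2, rfl⟩
    exact ⟨x - (w1 ⊔ w2), ⟨w1 ⊔ w2, hDsup hw1 hw2, rfl⟩,
      sub_le_sub_left le_sup_left x, sub_le_sub_left le_sup_right x⟩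
  have hSglb : IsGLB S 0 := by
    constructor
    · rintro - ⟨w, hw, rfl⟩
      exact sub_nonneg.mpr hw.2.2
    · intro l hl
      have hub : (x - l) ∈ upperBounds D := by
        intro w hw
        exact le_sub_comm.mp (hl ⟨w, hw, rfl⟩)
      have h := hlub.2 hub
      have h2 : x - (x - l) ≤ x - x := sub_le_sub_left h x
      simpa using h2
  have hglbY := hoc S hSne hSdir hSglb
  have hlubY : IsLUB ((fun w => T w) '' D) (T x) := by
    constructor
    · rintro - ⟨w, hw, rfl⟩
      exact hpos hw.2.2
    · intro u hu
      have hlb : (T x - u) ∈ lowerBounds ((fun a => |T a|) '' S) := by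
        rintro - ⟨-, ⟨w, hw, rfl⟩, rfl⟩
        have h1 : (0 : Y) ≤ T (x - w) := by
          rw [map_sub]
          exact sub_nonneg.mpr (hpos hw.2.2)
        show T x - u ≤ |T (x - w)|
        rw [abs_of_nonneg h1, map_sub]
        exact sub_le_sub_left (hu ⟨w, hw, rfl⟩) _
      exact sub_nonpos.mp (hglbY.2 hlb)
  -- topological part: T x belongs to T(myBd T)
  have hTnn : ∀ {w : X}, 0 ≤ w → 0 ≤ T w := by
    intro w hw
    simpa using hpos hw
  set V : Submodule ℝ Y := (myBd T).map (T : X →ₗ[ℝ] Y) with hVdef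
  haveI hVfd : FiniteDimensional ℝ V := by
    have hle : V ≤ LinearMap.range (T : X →ₗ[ℝ] Y) := by
      rintro y ⟨v, hv, rfl⟩
      exact ⟨v, rfl⟩
    exact Submodule.finiteDimensional_of_le hle
  have hVclosed : IsClosed (V : Set Y) := Submodule.closed_of_finiteDimensional V
  set f : X → Y := fun w => T w with hfdef
  have hTD_sub : f '' D ⊆ (V : Set Y) := by
    rintro - ⟨w, hw, rfl⟩
    obtain ⟨b, v, hb, hv, rfl⟩ := hw.1
    have h : f (b + v) = T v := by
      show T (b + v) = T v
      rw [map_add, hb, zero_add]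
    rw [h]
    exact ⟨v, hv, rfl⟩
  set E : Set Y := closure (f '' D) with hEdef
  have hEV : E ⊆ (V : Set Y) := closure_minimal hTD_sub hVclosed
  have himg_bd : f '' D ⊆ Metric.closedBall (0 : Y) ‖T x‖ := by
    rintro - ⟨w, hw, rfl⟩
    rw [Metric.mem_closedBall, dist_zero_right]
    apply norm_le_norm_of_abs_le_abs
    rw [abs_of_nonneg (hTnn hw.2.1), abs_of_nonneg (hTnn hx)]
    exact hpos hw.2.2
  have hEbd : ∀ y ∈ E, ‖y‖ ≤ ‖T x‖ := by
    intro y hy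
    have := closure_minimal himg_bd Metric.isClosed_closedBall hy
    rwa [Metric.mem_closedBall, dist_zero_right] at this
  have hEcompact : IsCompact E := by
    have hE' : IsClosed ((↑) ⁻¹' E : Set V) := isClosed_closure.preimage continuous_subtype_val
    have hbdd : Bornology.IsBounded ((↑) ⁻¹' E : Set V) := by
      rw [isBounded_iff_forall_norm_le]
      exact ⟨‖T x‖, fun y hy => hEbd _ hy⟩
    have hcomp' : IsCompact ((↑) ⁻¹' E : Set V) := Metric.isCompact_of_isClosed_isBounded hE' hbdd
    have heq : E = (↑) '' ((↑) ⁻¹' E : Set V) := by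
      rw [Set.image_preimage_eq_inter_range, Subtype.range_coe]
      exact (Set.inter_eq_left.mpr hEV).symm
    rw [heq]
    exact hcomp'.image continuous_subtype_val
  set G : {w // w ∈ D} → Filter Y :=
    fun w => Filter.principal (f '' {w' ∈ D | (w : X) ≤ w'}) with hGdef
  haveI : Nonempty {w // w ∈ D} := ⟨⟨0, hD0⟩⟩
  have hdir : Directed (· ≥ ·) G := by
    intro w1 w2
    refine ⟨⟨(w1 : X) ⊔ (w2 : X), hDsup w1.2 w2.2⟩, ?_, ?_⟩
    · apply Filter.principal_mono.mpr
      apply Set.image_mono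
      intro w' hw'
      exact ⟨hw'.1, le_trans le_sup_left hw'.2⟩
    · apply Filter.principal_mono.mpr
      apply Set.image_mono
      intro w' hw'
      exact ⟨hw'.1, le_trans le_sup_right hw'.2⟩
  haveI hneF : (⨅ w, G w).NeBot :=
    Filter.iInf_neBot_of_directed hdir
      (fun w => Filter.principal_neBot_iff.mpr ⟨T w, ⟨(w : X), ⟨w.2, le_rfl⟩, rfl⟩⟩)
  have hFE : (⨅ w, G w) ≤ Filter.principal E := by
    refine le_trans (iInf_le G ⟨0, hD0⟩) ?_
    apply Filter.principal_mono.mpr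
    refine subset_trans ?_ subset_closure
    exact Set.image_mono (Set.sep_subset _ _)
  obtain ⟨p, hpE, hp⟩ := hEcompact hFE
  have hub : ∀ w ∈ D, T w ≤ p := by
    intro w hw
    have hmemF : f '' {w' ∈ D | w ≤ w'} ∈ (⨅ u, G u) :=
      Filter.mem_iInf_of_mem ⟨w, hw⟩ (Filter.mem_principal_self _)
    have hcp : ClusterPt p (Filter.principal (f '' {w' ∈ D | w ≤ w'})) :=
      hp.mono (Filter.le_principal_iff.mpr hmemF)
    have hclm : p ∈ closure (f '' {w' ∈ D | w ≤ w'}) := mem_closure_iff_clusterPt.mpr hcp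
    have hsubIci : closure (f '' {w' ∈ D | w ≤ w'}) ⊆ Set.Ici (T w) := by
      apply closure_minimal ?_ isClosed_Ici
      rintro - ⟨w', hw', rfl⟩
      exact hpos hw'.2
    exact hsubIci hclm
  have hple : p ≤ T x := by
    have hsub2 : E ⊆ Set.Iic (T x) := by
      apply closure_minimal ?_ isClosed_Iic
      rintro - ⟨w, hw, rfl⟩
      exact hpos hw.2.2
    exact hsub2 hpE
  have hub' : p ∈ upperBounds (f '' D) := by
    rintro - ⟨w, hw, rfl⟩
    exact hub w hw
  have hpx : T x = p := le_antisymm (hlubY.2 hub') hple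
  obtain ⟨v, hv, hveq⟩ := hEV hpE
  exact ⟨v, hv, by rw [hpx]; exact hveq⟩

end StepA

/-- every finite-rank order continuous lattice homomorphism between Banach
lattices attains its norm. -/
theorem finiteRank_orderContinuous_latticeHom_attains_norm
    {X Y : Type*} [NormedAddCommGroup X] [Lattice X] [IsOrderedAddMonoid X] [HasSolidNorm X] [NormedSpace ℝ X] [CompleteSpace X]
    [NormedAddCommGroup Y] [Lattice Y] [IsOrderedAddMonoid Y] [HasSolidNorm Y] [NormedSpace ℝ Y] [CompleteSpace Y]
    (T : X →L[ℝ] Y)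
    (hhom : ∀ x y : X, T (x ⊔ y) = T x ⊔ T y)
    (hrank : FiniteDimensional ℝ (LinearMap.range (T : X →ₗ[ℝ] Y)))
    (hoc : ∀ S : Set X, S.Nonempty → DirectedOn (· ≥ ·) S → IsGLB S 0 →
      IsGLB ((fun x => |T x|) '' S) 0) :
    ∃ x : X, ‖x‖ ≤ 1 ∧ ‖T x‖ = ‖T‖ := by
  -- decomposition: every x has a representative in myBd T with smaller norm
  have hdec : ∀ x : X, ∃ v ∈ myBd T, T v = T x ∧ ‖v‖ ≤ ‖x‖ := by
    intro x
    obtain ⟨v1, hv1, hv1x⟩ := my_stepA T hhom hrank hoc (posPart_nonneg x)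
    obtain ⟨v2, hv2, hv2x⟩ := my_stepA T hhom hrank hoc (negPart_nonneg x)
    refine ⟨v1 - v2, (myBd T).sub_mem hv1 hv2, ?_, ?_⟩
    · rw [map_sub, hv1x, hv2x, ← map_sub]
      congr 1
      exact posPart_sub_negPart x
    · set v := v1 - v2 with hvdef
      set b := x - v with hbdef
      have hbker : T b = 0 := by
        rw [hbdef, map_sub]
        have hTv : T v = T x := by
          rw [hvdef, map_sub, hv1x, hv2x, ← map_sub]
          congr 1
          exact posPart_sub_negPart x
        rw [hTv, sub_self]
      have hdisj : |v| ⊓ |b| = 0 := ((myBd T).sub_mem hv1 hv2) b hbker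
      have h1 : |v| ≤ |x| + |b| := by
        have hveq : v = x + (-b) := by rw [hbdef]; abel
        calc |v| = |x + (-b)| := by rw [← hveq]
          _ ≤ |x| + |(-b)| := abs_add_le x (-b)
          _ = |x| + |b| := by rw [abs_neg]
      have h4 : |v| ≤ |x| := by
        have h2 : |v| = |v| ⊓ (|x| + |b|) := (inf_eq_left.mpr h1).symm
        have h3 : |v| ⊓ (|x| + |b|) ≤ |v| ⊓ |x| + |v| ⊓ |b| :=
          my_inf_add_le (abs_nonneg v) (abs_nonneg x) (abs_nonneg b)
        calc |v| = |v| ⊓ (|x| + |b|) := h2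
          _ ≤ |v| ⊓ |x| + |v| ⊓ |b| := h3
          _ = |v| ⊓ |x| := by rw [hdisj, add_zero]
          _ ≤ |x| := inf_le_right
      exact norm_le_norm_of_abs_le_abs h4
  -- myBd T is finite dimensional
  haveI : FiniteDimensional ℝ (LinearMap.range (T : X →ₗ[ℝ] Y)) := hrank
  have hinj : Function.Injective ((T : X →ₗ[ℝ] Y).domRestrict (myBd T)) := by
    intro v w hvw
    apply Subtype.ext
    have h0 : T ((v : X) - (w : X)) = 0 := by
      rw [map_sub]
      have : T (v : X) = T (w : X) := hvw
      rw [this, sub_self]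
    have hmem := ((myBd T).sub_mem v.2 w.2) _ h0
    rw [inf_idem] at hmem
    have habs0 : ((v : X) - w) ⊔ (-((v : X) - w)) = 0 := hmem
    have hle : (v : X) - w ≤ 0 := le_sup_left.trans habs0.le
    have hge : (0 : X) ≤ (v : X) - w := by
      have := le_sup_right.trans habs0.le
      simpa using neg_nonpos.mp this
    exact sub_eq_zero.mp (le_antisymm hle hge)
  haveI hBdfd : FiniteDimensional ℝ (myBd T) := by
    let g : (myBd T) →ₗ[ℝ] LinearMap.range (T : X →ₗ[ℝ] Y) :=
      LinearMap.codRestrict _ ((T : X →ₗ[ℝ] Y).domRestrict (myBd T)) (fun v => ⟨v, rfl⟩)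
    refine FiniteDimensional.of_injective g (fun a b hab => hinj ?_)
    exact congrArg Subtype.val hab
  -- compactness and attainment
  have hball : IsCompact (Metric.closedBall (0 : myBd T) 1) := isCompact_closedBall _ _
  have hcont : Continuous (fun v : myBd T => ‖T (v : X)‖) :=
    (T.continuous.comp continuous_subtype_val).norm
  obtain ⟨v0, hv0mem, hv0max⟩ := hball.exists_isMaxOn
    ⟨0, Metric.mem_closedBall_self zero_le_one⟩ hcont.continuousOn
  have hv0le : ‖(v0 : X)‖ ≤ 1 := by
    have := Metric.mem_closedBall.mp hv0mem
    rwa [dist_zero_right] at this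
  refine ⟨(v0 : X), hv0le, ?_⟩
  apply le_antisymm
  · calc ‖T (v0 : X)‖ ≤ ‖T‖ * ‖(v0 : X)‖ := T.le_opNorm _
      _ ≤ ‖T‖ * 1 := mul_le_mul_of_nonneg_left hv0le (norm_nonneg T)
      _ = ‖T‖ := mul_one _
  · apply ContinuousLinearMap.opNorm_le_bound T (norm_nonneg _)
    intro x
    obtain ⟨v, hv, hTv, hnv⟩ := hdec x
    rcases eq_or_ne v 0 with rfl | hvne
    · rw [← hTv, map_zero, norm_zero]
      positivity
    · have hvpos : 0 < ‖v‖ := norm_pos_iff.mpr hvne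
      set u : myBd T := ⟨(‖v‖⁻¹ : ℝ) • v, (myBd T).smul_mem _ hv⟩ with hudef
      have hu1 : ‖(u : X)‖ = 1 := by
        show ‖(‖v‖⁻¹ : ℝ) • v‖ = 1
        rw [norm_smul, norm_inv, norm_norm]
        field_simp
      have humem : u ∈ Metric.closedBall (0 : myBd T) 1 := by
        rw [Metric.mem_closedBall, dist_zero_right]
        show ‖(u : X)‖ ≤ 1
        rw [hu1]
      have hmax : ‖T (u : X)‖ ≤ ‖T (v0 : X)‖ := hv0max humem
      have hTu : ‖T (u : X)‖ = ‖v‖⁻¹ * ‖T v‖ := by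
        show ‖T ((‖v‖⁻¹ : ℝ) • v)‖ = _
        rw [map_smul, norm_smul, norm_inv, norm_norm]
      calc ‖T x‖ = ‖T v‖ := by rw [hTv]
        _ = ‖v‖ * (‖v‖⁻¹ * ‖T v‖) := by field_simp
        _ = ‖v‖ * ‖T (u : X)‖ := by rw [hTu]
        _ ≤ ‖v‖ * ‖T (v0 : X)‖ := mul_le_mul_of_nonneg_left hmax hvpos.le
        _ ≤ ‖x‖ * ‖T (v0 : X)‖ := mul_le_mul_of_nonneg_right hnv (norm_nonneg _)
        _ = ‖T (v0 : X)‖ * ‖x‖ := mul_comm _ _
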